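/- Let H be an inner product space (over ℝ or ℂ) of dimension at least two. For every integer n ≥ 2 and all vectors x_1, …, x_n ∈ H, the parallelopiped law holds: ∑_{k=1}^{n} (−1)^k 2^{n−k} ∑_{I ⊆ {1,…,n}, |I| = k} ∑_{J ⊆ I} ‖x_J − x_{I∖J}‖² = 0. (Equivalently, ∑_{k=1}^{n} ∑_{1 ≤ i_1 < ⋯ < i_k ≤ n} (−1)^k 2^{n−k} ∑_{ε_1,…,ε_k ∈ {1,−1}} ‖ε_1 x_{i_1} + ⋯ + ε_k x_{i_k}‖² = 0.) -/

import Mathlib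

open Finset

lemma aux_sum {𝕜 H : Type*} [RCLike 𝕜] [NormedAddCommGroup H] [InnerProductSpace 𝕜 H]
    {ι : Type*} [DecidableEq ι] (x : ι → H) (I : Finset ι) :
    ∑ J ∈ I.powerset, ‖(∑ i ∈ J, x i) - ∑ i ∈ I \ J, x i‖ ^ 2
      = 2 ^ I.card * ∑ i ∈ I, ‖x i‖ ^ 2 := by
  induction I using Finset.induction with
  | empty => simp
  | @insert a I ha ih =>
    rw [powerset_insert, Finset.sum_union, Finset.sum_image]
    · have key : ∀ J ∈ I.powerset,
        (‖(∑ i ∈ J, x i) - ∑ i ∈ insert a I \ J, x i‖ ^ 2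
          + ‖(∑ i ∈ insert a J, x i) - ∑ i ∈ insert a I \ insert a J, x i‖ ^ 2)
          = 2 * ‖(∑ i ∈ J, x i) - ∑ i ∈ I \ J, x i‖ ^ 2 + 2 * ‖x a‖ ^ 2 := by
        intro J hJ
        rw [mem_powerset] at hJ
        have haJ : a ∉ J := fun h => ha (hJ h)
        have h1 : insert a I \ J = insert a (I \ J) := by
          rw [insert_sdiff_of_notMem _ haJ]
        have h2 : insert a I \ insert a J = I \ J := by
          ext i
          simp only [mem_sdiff, mem_insert]
          constructor
          · rintro ⟨hi | hi, hni⟩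
            · exact absurd (Or.inl hi) hni
            · exact ⟨hi, fun h => hni (Or.inr h)⟩
          · rintro ⟨hi, hni⟩
            exact ⟨Or.inr hi, fun h => h.elim (fun h' => ha (h' ▸ hi)) hni⟩
        have h3 : a ∉ I \ J := fun h => ha (mem_sdiff.1 h).1
        rw [h1, h2, Finset.sum_insert h3, Finset.sum_insert haJ]
        have pl := parallelogram_law_with_norm 𝕜 ((∑ i ∈ J, x i) - ∑ i ∈ I \ J, x i) (x a)
        have e1 : (∑ i ∈ J, x i) - (x a + ∑ i ∈ I \ J, x i)
            = ((∑ i ∈ J, x i) - ∑ i ∈ I \ J, x i) - x a := by abel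
        have e2 : (x a + ∑ i ∈ J, x i) - (∑ i ∈ I \ J, x i)
            = ((∑ i ∈ J, x i) - ∑ i ∈ I \ J, x i) + x a := by abel
        rw [e1, e2]
        nlinarith [pl]
      rw [← Finset.sum_add_distrib, Finset.sum_congr rfl key, Finset.sum_add_distrib,
        ← Finset.mul_sum, ih, Finset.sum_const, card_powerset,
        card_insert_of_notMem ha, Finset.sum_insert ha, nsmul_eq_mul]
      push_cast
      ring
    · intro J hJ K hK h
      rw [mem_coe, mem_powerset] at hJ hK
      have : ∀ L ⊆ I, insert a L ∩ I = L := fun L hL => by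
        rw [insert_inter_of_notMem ha, inter_eq_left.2 hL]
      rw [← this J hJ, ← this K hK, h]
    · rw [Finset.disjoint_left]
      intro J hJ hJ'
      rw [mem_powerset] at hJ
      obtain ⟨K, hK, rfl⟩ := mem_image.1 hJ'
      exact ha (hJ (mem_insert_self a K))

lemma count_mem {n k : ℕ} (hk : 1 ≤ k) (i : Fin n) :
    ((Finset.powersetCard k (Finset.univ : Finset (Fin n))).filter (fun I => i ∈ I)).card
      = (n - 1).choose (k - 1) := by
  have hcard : #((Finset.univ : Finset (Fin n)).erase i) = n - 1 := by
    rw [Finset.card_erase_of_mem (mem_univ i), Finset.card_univ, Fintype.card_fin]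
  rw [← hcard, ← Finset.card_powersetCard (k - 1) (Finset.univ.erase i)]
  · apply Finset.card_bij (fun I _ => I.erase i)
    · intro I hI
      simp only [mem_filter, mem_powersetCard] at hI
      obtain ⟨⟨_, hcard⟩, hi⟩ := hI
      rw [mem_powersetCard]
      refine ⟨fun j hj => ?_, by rw [card_erase_of_mem hi, hcard]⟩
      rw [mem_erase] at hj ⊢
      exact ⟨hj.1, mem_univ _⟩
    · intro I hI J hJ h
      simp only [mem_filter] at hI hJ
      rw [← Finset.insert_erase hI.2, ← Finset.insert_erase hJ.2, h]
    · intro K hK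
      rw [mem_powersetCard] at hK
      refine ⟨insert i K, ?_, ?_⟩
      · have hiK : i ∉ K := fun h => (Finset.mem_erase.1 (hK.1 h)).1 rfl
        simp only [mem_filter, mem_powersetCard]
        exact ⟨⟨fun j _ => mem_univ j, by rw [card_insert_of_notMem hiK, hK.2,
          Nat.sub_add_cancel hk]⟩, mem_insert_self i K⟩
      · have hiK : i ∉ K := fun h => (Finset.mem_erase.1 (hK.1 h)).1 rfl
        rw [Finset.erase_insert hiK]

theorem stmt7 {𝕜 H : Type*} [RCLike 𝕜] [NormedAddCommGroup H] [InnerProductSpace 𝕜 H]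
    (hdim : 2 ≤ Module.rank 𝕜 H) (n : ℕ) (hn : 2 ≤ n) (x : Fin n → H) :
    ∑ k ∈ Finset.Icc 1 n, (-1 : ℝ) ^ k * 2 ^ (n - k) *
      ∑ I ∈ Finset.powersetCard k (Finset.univ : Finset (Fin n)),
        ∑ J ∈ I.powerset, ‖(∑ i ∈ J, x i) - ∑ i ∈ I \ J, x i‖ ^ 2 = 0 := by
  set S : ℝ := ∑ i, ‖x i‖ ^ 2 with hS
  have key : ∀ k ∈ Finset.Icc 1 n,
      (-1 : ℝ) ^ k * 2 ^ (n - k) *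
      ∑ I ∈ Finset.powersetCard k (Finset.univ : Finset (Fin n)),
        ∑ J ∈ I.powerset, ‖(∑ i ∈ J, x i) - ∑ i ∈ I \ J, x i‖ ^ 2
      = (-1 : ℝ) ^ k * (((n-1).choose (k-1) : ℝ) * (2 ^ n * S)) := by
    intro k hk
    rw [Finset.mem_Icc] at hk
    have step1 : ∀ I ∈ Finset.powersetCard k (Finset.univ : Finset (Fin n)),
        ∑ J ∈ I.powerset, ‖(∑ i ∈ J, x i) - ∑ i ∈ I \ J, x i‖ ^ 2
          = (2:ℝ) ^ k * ∑ i ∈ I, ‖x i‖ ^ 2 := by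
      intro I hI
      rw [aux_sum (𝕜 := 𝕜) x I, (Finset.mem_powersetCard.1 hI).2]
    rw [Finset.sum_congr rfl step1, ← Finset.mul_sum]
    have step2 : ∑ I ∈ Finset.powersetCard k (Finset.univ : Finset (Fin n)),
        ∑ i ∈ I, ‖x i‖ ^ 2 = ((n-1).choose (k-1) : ℝ) * S := by
      have : ∀ I ∈ Finset.powersetCard k (Finset.univ : Finset (Fin n)),
          ∑ i ∈ I, ‖x i‖ ^ 2 = ∑ i : Fin n, if i ∈ I then ‖x i‖ ^ 2 else 0 := by
        intro I _
        rw [Finset.sum_ite_mem, Finset.univ_inter]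
      rw [Finset.sum_congr rfl this, Finset.sum_comm]
      have : ∀ i : Fin n,
          (∑ I ∈ Finset.powersetCard k (Finset.univ : Finset (Fin n)),
            if i ∈ I then ‖x i‖ ^ 2 else 0) = ((n-1).choose (k-1) : ℝ) * ‖x i‖ ^ 2 := by
        intro i
        rw [Finset.sum_ite, Finset.sum_const_zero, add_zero, Finset.sum_const,
          count_mem hk.1 i, nsmul_eq_mul]
      rw [Finset.sum_congr rfl (fun i _ => this i), ← Finset.mul_sum, hS]
    rw [step2]
    have h2 : (2:ℝ) ^ (n - k) * (2:ℝ) ^ k = 2 ^ n := by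
      rw [← pow_add, Nat.sub_add_cancel hk.2]
    rw [← h2]
    ring
  rw [Finset.sum_congr rfl key]
  have halt : ∑ k ∈ Finset.Icc 1 n, (-1:ℝ)^k * ((n-1).choose (k-1) : ℝ) = 0 := by
    rw [← Finset.Ico_add_one_right_eq_Icc, Finset.sum_Ico_eq_sum_range]
    have hz : (∑ j ∈ Finset.range ((n-1) + 1), (-1:ℤ) ^ j * ((n-1).choose j : ℤ)) = 0 := by
      rw [Int.alternating_sum_range_choose]
      have : n - 1 ≠ 0 := by omega
      simp [this]
    have hn1 : (n - 1) + 1 = n := by omega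
    rw [hn1] at hz
    have : ∑ j ∈ Finset.range (n + 1 - 1), (-1:ℝ)^(1+j) * ((n-1).choose (1+j-1) : ℝ)
        = -∑ j ∈ Finset.range n, (-1:ℝ)^j * ((n-1).choose j : ℝ) := by
      rw [show n + 1 - 1 = n from rfl, ← Finset.sum_neg_distrib]
      refine Finset.sum_congr rfl fun j _ => ?_
      rw [show 1 + j - 1 = j from by omega, pow_add]
      ring
    rw [this]
    have : ∑ j ∈ Finset.range n, (-1:ℝ)^j * ((n-1).choose j : ℝ) = 0 := by
      exact_mod_cast hz
    rw [this, neg_zero]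
  calc ∑ k ∈ Finset.Icc 1 n, (-1:ℝ)^k * (((n-1).choose (k-1) : ℝ) * (2 ^ n * S))
      = (∑ k ∈ Finset.Icc 1 n, (-1:ℝ)^k * ((n-1).choose (k-1) : ℝ)) * (2 ^ n * S) := by
        rw [Finset.sum_mul]; exact Finset.sum_congr rfl fun k _ => by ring
    _ = 0 := by rw [halt, zero_mul]
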